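/- Let σ > 0 and let ν_g : [0,∞) → (0,∞) be a (strictly positive) function. For symmetric real 3×3 matrices S and D, the following two conditions are equivalent: (i) |S| ≤ σ if and only if D = O, and whenever |S| > σ one has S = σ·D/|D| + 2ν_g(|D|²)D; (ii) 2ν_g(|D|²) D = ((|S| − σ)⁺/|S|) S, where the right-hand side is interpreted as O when S = O. -/

import Mathlib

/-- Frobenius norm of a real 3×3 matrix: `|A|² = tr(A²)` for symmetric `A`. -/
noncomputable def frobNorm (A : Matrix (Fin 3) (Fin 3) ℝ) : ℝ :=
  Real.sqrt (∑ i, ∑ j, (A i j) ^ 2)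

lemma frobNorm_nonneg (A : Matrix (Fin 3) (Fin 3) ℝ) : 0 ≤ frobNorm A :=
  Real.sqrt_nonneg _

lemma frobNorm_eq_zero {A : Matrix (Fin 3) (Fin 3) ℝ} : frobNorm A = 0 ↔ A = 0 := by
  constructor
  · intro h
    have hs : (∑ i, ∑ j, (A i j) ^ 2) = 0 := by
      have h2 := (Real.sqrt_eq_zero (by positivity)).mp h
      exact h2
    ext i j
    have h1 := (Finset.sum_eq_zero_iff_of_nonneg (fun i _ => by positivity)).mp hs i (Finset.mem_univ i)
    have h2 := (Finset.sum_eq_zero_iff_of_nonneg (fun j _ => by positivity)).mp h1 j (Finset.mem_univ j)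
    have := pow_eq_zero_iff (n := 2) (by norm_num) |>.mp h2
    simpa using this
  · intro h; simp [h, frobNorm]

lemma frobNorm_pos {A : Matrix (Fin 3) (Fin 3) ℝ} (h : A ≠ 0) : 0 < frobNorm A :=
  lt_of_le_of_ne (frobNorm_nonneg A) (fun hc => h (frobNorm_eq_zero.mp hc.symm))

lemma frobNorm_smul (c : ℝ) (A : Matrix (Fin 3) (Fin 3) ℝ) :
    frobNorm (c • A) = |c| * frobNorm A := by
  unfold frobNorm
  have : (∑ i, ∑ j, ((c • A) i j) ^ 2) = c ^ 2 * ∑ i, ∑ j, (A i j) ^ 2 := by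
    simp [Finset.mul_sum, mul_pow]
  rw [this, Real.sqrt_mul (sq_nonneg c), Real.sqrt_sq_eq_abs]

theorem statement6 (σ : ℝ) (hσ : 0 < σ) (νg : ℝ → ℝ) (hνg : ∀ t, 0 ≤ t → 0 < νg t)
    (S D : Matrix (Fin 3) (Fin 3) ℝ) (hSsym : S.IsSymm) (hDsym : D.IsSymm) :
    ((frobNorm S ≤ σ ↔ D = 0) ∧
      (σ < frobNorm S → S = (σ / frobNorm D) • D + (2 * νg (frobNorm D ^ 2)) • D)) ↔
      (2 * νg (frobNorm D ^ 2)) • D = (max (frobNorm S - σ) 0 / frobNorm S) • S := by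
  set n := frobNorm S with hn
  set d := frobNorm D with hd
  set ν := νg (d ^ 2) with hν
  have hνpos : 0 < ν := hνg _ (sq_nonneg d)
  constructor
  · rintro ⟨h1, h2⟩
    by_cases h : n ≤ σ
    · have hD0 : D = 0 := h1.mp h
      have : max (n - σ) 0 = 0 := max_eq_right (by linarith)
      simp [hD0, this]
    · push_neg at h
      have hDne : D ≠ 0 := fun hD0 => h.not_ge (h1.mpr hD0)
      have hdpos : 0 < d := frobNorm_pos hDne
      have hS : S = (σ / d + 2 * ν) • D := by
        rw [h2 h, add_smul]
      have hc : 0 < σ / d + 2 * ν := by positivity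
      have hnval : n = σ + 2 * ν * d := by
        conv_lhs => rw [hn, hS]
        rw [frobNorm_smul, abs_of_pos hc, ← hd]
        field_simp
      have hmax : max (n - σ) 0 = n - σ := max_eq_left (by linarith)
      rw [hmax, hS, smul_smul]
      congr 1
      have hnpos : 0 < n := lt_trans hσ h
      field_simp
      nlinarith [hnval]
  · intro heq
    have hiff : n ≤ σ ↔ D = 0 := by
      constructor
      · intro h
        have hmax : max (n - σ) 0 = 0 := max_eq_right (by linarith)
        rw [hmax] at heq
        simp at heq
        rcases heq with h' | h'
        · exact absurd h' hνpos.ne'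
        · exact h'
      · intro hD0
        by_contra hc
        push_neg at hc
        have hnpos : 0 < n := lt_trans hσ hc
        have hmax : max (n - σ) 0 = n - σ := max_eq_left (by linarith)
        rw [hmax, hD0, smul_zero] at heq
        have hk : (n - σ) / n ≠ 0 := by
          apply div_ne_zero <;> [skip; exact hnpos.ne'] ; linarith
        have hS0 : S = 0 := by
          rcases smul_eq_zero.mp heq.symm with h' | h'
          · exact absurd h' hk
          · exact h'
        have : n = 0 := by rw [hn, hS0]; exact frobNorm_eq_zero.mpr rfl
        linarith
    refine ⟨hiff, fun hlt => ?_⟩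
    have hnpos : 0 < n := lt_trans hσ hlt
    have hDne : D ≠ 0 := fun h0 => hlt.not_ge (hiff.mpr h0)
    have hdpos : 0 < d := frobNorm_pos hDne
    have hmax : max (n - σ) 0 = n - σ := max_eq_left (by linarith)
    rw [hmax] at heq
    have hk : (0:ℝ) < (n - σ) / n := div_pos (by linarith) hnpos
    have hns : (0:ℝ) < n - σ := by linarith
    have hS : S = (2 * ν * n / (n - σ)) • D := by
      have h1 : (n / (n - σ)) • (((n - σ) / n) • S) = S := by
        rw [smul_smul, show n / (n - σ) * ((n - σ) / n) = 1 by field_simp, one_smul]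
      calc S = (n / (n - σ)) • (((n - σ) / n) • S) := h1.symm
        _ = (n / (n - σ)) • ((2 * ν) • D) := by rw [heq]
        _ = (2 * ν * n / (n - σ)) • D := by rw [smul_smul]; congr 1; ring
    have hnval : n - σ = 2 * ν * d := by
      have h2 : n = 2 * ν * n / (n - σ) * d := by
        conv_lhs => rw [hn, hS]
        rw [frobNorm_smul, abs_of_pos (show (0:ℝ) < 2 * ν * n / (n - σ) by positivity), ← hd]
      have h3 : n * (n - σ) = 2 * ν * n * d := by
        field_simp at h2
        rw [h2]; ring
      nlinarith [h3, hnpos]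
    rw [hS, ← add_smul]
    congr 1
    rw [hnval]
    field_simp
    nlinarith [hnval]
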